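/- arXiv:1702.03830 — 3 statements merged into one kernel-verified Lean document; each statement's English description precedes it below -/
import Mathlib

section
/- If a, b, c are distinct odd positive integers, then the polynomial x^a + x^b + x^c - 1 is irreducible over the rationals. -/
open Polynomial

lemma aux1 (z : ℂ) (hz : z ≠ 0) (p q r : ℕ) (hp : Odd p) (hqr : r < q)
    (h1 : z ^ p = 1) (h2 : z ^ q + z ^ r = 0) : False := by
  have hqr' : z ^ (q - r) * z ^ r = z ^ q := by rw [← pow_add]; congr 1; omega
  have h3 : z ^ (q - r) = -1 := by
    have hr : z ^ r ≠ 0 := pow_ne_zero _ hz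
    have : z ^ (q - r) * z ^ r = -1 * z ^ r := by rw [hqr']; linear_combination h2
    exact mul_right_cancel₀ hr this
  have e1 : ((1 : ℂ)) = (z ^ p) ^ (q - r) := by rw [h1, one_pow]
  rw [← pow_mul, mul_comm p (q-r), pow_mul, h3, hp.neg_one_pow] at e1
  norm_num at e1

lemma aux1' (z : ℂ) (hz : z ≠ 0) (p q r : ℕ) (hp : Odd p) (hqr : q ≠ r)
    (h1 : z ^ p = 1) (h2 : z ^ q + z ^ r = 0) : False := by
  rcases hqr.lt_or_gt with h | h
  · exact aux1 z hz p r q hp h h1 (by linear_combination h2)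
  · exact aux1 z hz p q r hp h h1 h2

lemma no_common (a b c : ℕ) (ha : 0 < a) (hb : 0 < b) (hc : 0 < c)
    (hoa : Odd a) (hob : Odd b) (hoc : Odd c)
    (hab : a ≠ b) (hac : a ≠ c) (hbc : b ≠ c) (z : ℂ)
    (h1 : z ^ a + z ^ b + z ^ c = 1)
    (h2 : (z⁻¹) ^ a + (z⁻¹) ^ b + (z⁻¹) ^ c = 1) : False := by
  have hz : z ≠ 0 := by
    rintro rfl
    simp [zero_pow ha.ne', zero_pow hb.ne', zero_pow hc.ne'] at h1
  set u := z ^ a with hu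
  set v := z ^ b with hv
  set w := z ^ c with hw
  have hu0 : u ≠ 0 := pow_ne_zero _ hz
  have hv0 : v ≠ 0 := pow_ne_zero _ hz
  have hw0 : w ≠ 0 := pow_ne_zero _ hz
  have he2 : u * v + v * w + w * u = u * v * w := by
    rw [inv_pow, inv_pow, inv_pow, ← hu, ← hv, ← hw] at h2
    field_simp at h2
    linear_combination h2
  have hu1 : (u - 1) * (u ^ 2 + u * v * w) = 0 := by linear_combination u ^ 2 * h1 - u * he2
  have hv1 : (v - 1) * (v ^ 2 + u * v * w) = 0 := by linear_combination v ^ 2 * h1 - v * he2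
  have hw1 : (w - 1) * (w ^ 2 + u * v * w) = 0 := by linear_combination w ^ 2 * h1 - w * he2
  have key : u = 1 ∨ v = 1 ∨ w = 1 := by
    rcases mul_eq_zero.mp hu1 with h | hu2
    · exact Or.inl (by linear_combination h)
    rcases mul_eq_zero.mp hv1 with h | hv2
    · exact Or.inr (Or.inl (by linear_combination h))
    rcases mul_eq_zero.mp hw1 with h | hw2
    · exact Or.inr (Or.inr (by linear_combination h))
    have huv : (u - v) * (u + v) = 0 := by linear_combination hu2 - hv2
    have huw : (u - w) * (u + w) = 0 := by linear_combination hu2 - hw2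
    rcases mul_eq_zero.mp huv with h4 | h4 <;> rcases mul_eq_zero.mp huw with h5 | h5
    · exfalso
      have hvu : v = u := by linear_combination -h4
      have hwu : w = u := by linear_combination -h5
      rw [hvu, hwu] at h1 hu2
      have : u ^ 2 * (1 + u) = 0 := by linear_combination hu2
      rcases mul_eq_zero.mp this with h6 | h6
      · exact hu0 (by simpa [pow_eq_zero_iff] using h6)
      · have : u = -1 := by linear_combination h6
        rw [this] at h1; norm_num at h1
    · exact Or.inl (by linear_combination h1 + h4 - h5)
    · exact Or.inl (by linear_combination h1 - h4 + h5)
    · exact Or.inr (Or.inl (by linear_combination h1 - h5))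
  rcases key with h | h | h
  · exact aux1' z hz a b c hoa hbc h (by linear_combination h1 - h)
  · exact aux1' z hz b a c hob hac h (by linear_combination h1 - h)
  · exact aux1' z hz c a b hoc hab h (by linear_combination h1 - h)

lemma natDegree_quad {s t u v : ℤ} (a i j : ℕ) (hij : j < i) (hia : i < a) (hs : s ≠ 0) :
    (C s * X ^ a + C t * X ^ i + C u * X ^ j + C v : ℤ[X]).natDegree = a := by
  compute_degree! <;> first
    | omega
    | (rw [if_neg (by omega : ¬ a = i), if_neg (by omega : ¬ a = j),
        if_neg (by omega : ¬ a = 0)]; simpa using hs)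

lemma mirror_quad (p : ℤ[X]) {s t u v : ℤ} (a i j : ℕ) (hij : j < i) (hia : i < a) (hj : 0 < j)
    (hp : p = C s * X ^ a + C t * X ^ i + C u * X ^ j + C v) (hs : s ≠ 0) (hv : v ≠ 0) :
    p.mirror = C v * X ^ a + C u * X ^ (a - j) + C t * X ^ (a - i) + C s := by
  have hd : p.natDegree = a := by rw [hp]; exact natDegree_quad a i j hij hia hs
  have h0 : p.coeff 0 = v := by
    rw [hp]
    simp [coeff_X_pow, if_neg (by omega : ¬ (0:ℕ) = a), if_neg (by omega : ¬ (0:ℕ) = i),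
      if_neg (by omega : ¬ (0:ℕ) = j)]
  have ht : p.natTrailingDegree = 0 := by
    rw [natTrailingDegree_eq_zero]; right; rw [h0]; exact hv
  have hC : (C v : ℤ[X]) = C v * X ^ 0 := by simp
  rw [Polynomial.mirror, ht, pow_zero, mul_one, Polynomial.reverse, hd, hp, hC]
  rw [reflect_add, reflect_add, reflect_add, reflect_C_mul_X_pow, reflect_C_mul_X_pow,
    reflect_C_mul_X_pow, reflect_C_mul_X_pow]
  rw [revAt_le (le_refl a), revAt_le hia.le, revAt_le (by omega : j ≤ a), revAt_le (by omega : 0 ≤ a)]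
  simp [Nat.sub_self, Nat.sub_zero]
  ring
lemma int_sq_ge_one {x : ℤ} (h : x ≠ 0) : 1 ≤ x ^ 2 := by
  nlinarith [Int.one_le_abs h, abs_nonneg x, sq_abs x]

lemma int_sq_ge_four {x : ℤ} (h : x ≠ 0) (h1 : x ^ 2 ≠ 1) : 4 ≤ x ^ 2 := by
  have h2 := Int.one_le_abs h
  have h3 : 2 ≤ |x| := by
    rcases eq_or_lt_of_le h2 with h4 | h4
    · exfalso; apply h1; nlinarith [sq_abs x]
    · omega
  nlinarith [sq_abs x, abs_nonneg x]
lemma sign_bash (da di dj d0 ei ej fi fj : ℤ)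
    (hda : da = 1 ∨ da = -1) (hdi : di = 1 ∨ di = -1) (hdj : dj = 1 ∨ dj = -1)
    (hd0 : d0 = 1 ∨ d0 = -1) (hei : ei = 1 ∨ ei = -1) (hej : ej = 1 ∨ ej = -1)
    (hfi : fi * ei = -1) (hfj : fj * ej = -1)
    (hE1 : (da + di + dj + d0) * (d0 + dj + di + da) = 4)
    (hEm : (-da + di * ei + dj * ej + d0) * (-d0 + dj * fj + di * fi + da) = -16) :
    di = dj ∧ d0 = -da ∧ ei * di = -da ∧ ej * dj = -da := by
  rcases hda with rfl|rfl <;> rcases hdi with rfl|rfl <;> rcases hdj with rfl|rfl <;>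
    rcases hd0 with rfl|rfl <;> rcases hei with rfl|rfl <;> rcases hej with rfl|rfl <;>
    omega
lemma sq_pm (x : ℤ) (h : x ^ 2 = 1) : x = 1 ∨ x = -1 := by
  have h2 : (x - 1) * (x + 1) = 0 := by linear_combination h
  rcases mul_eq_zero.mp h2 with h3 | h3
  · left; linarith
  · right; linarith

lemma roots_contra (a b c : ℕ) (hc : 0 < c) (hcb : c < b) (hba : b < a)
    (hoa : Odd a) (hob : Odd b) (hoc : Odd c) (z : ℂ)
    (h1 : z ^ a + z ^ b + z ^ c - 1 = 0)
    (h2 : 1 + z ^ (a - c) + z ^ (a - b) - z ^ a = 0) : False := by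
  have hz : z ≠ 0 := by
    rintro rfl
    rw [zero_pow (by omega : a ≠ 0), zero_pow (by omega : b ≠ 0),
      zero_pow (by omega : c ≠ 0)] at h1
    norm_num at h1
  have hZb : z ^ (a - b) * z ^ b = z ^ a := by rw [← pow_add]; congr 1; omega
  have hZc : z ^ (a - c) * z ^ c = z ^ a := by rw [← pow_add]; congr 1; omega
  refine no_common a b c (by omega) (by omega) hc hoa hob hoc (by omega) (by omega) (by omega) z
    (by linear_combination h1) ?_
  rw [inv_pow, inv_pow, inv_pow]
  have ha0 : z ^ a ≠ 0 := pow_ne_zero _ hz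
  have hb0 : z ^ b ≠ 0 := pow_ne_zero _ hz
  have hc0 : z ^ c ≠ 0 := pow_ne_zero _ hz
  field_simp
  linear_combination (z ^ b * z ^ c) * h2 - z ^ c * hZb - z ^ b * hZc
lemma neg_one_pow_pm (n : ℕ) : (-1:ℤ) ^ n = 1 ∨ (-1:ℤ) ^ n = -1 := by
  rcases Nat.even_or_odd n with h | h
  · exact Or.inl h.neg_one_pow
  · exact Or.inr h.neg_one_pow

lemma factor_contra (a b c : ℕ) (hc : 0 < c) (hcb : c < b) (hba : b < a)
    (hoa : Odd a) (hob : Odd b) (hoc : Odd c)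
    (k : ℤ[X]) (hkd : 0 < k.natDegree)
    (hkF : ∀ z : ℂ, aeval z k = 0 →
      (z ^ a + z ^ b + z ^ c - 1 = 0) ∧ (1 + z ^ (a - c) + z ^ (a - b) - z ^ a = 0)) : False := by
  have hdeg : 0 < (k.map (Int.castRingHom ℂ)).degree := by
    rw [degree_map_eq_of_injective (show Function.Injective (Int.castRingHom ℂ) from
      fun x y hxy => by simpa using hxy)]
    exact natDegree_pos_iff_degree_pos.mp hkd
  obtain ⟨z, hz⟩ := Complex.exists_root hdeg
  have hzk : aeval z k = 0 := by
    rw [aeval_def, algebraMap_int_eq, ← eval_map]; exact hz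
  obtain ⟨h1, h2⟩ := hkF z hzk
  exact roots_contra a b c hc hcb hba hoa hob hoc z h1 h2
set_option maxHeartbeats 2000000 in
lemma key_int (a b c : ℕ) (hc : 0 < c) (hcb : c < b) (hba : b < a)
    (hoa : Odd a) (hob : Odd b) (hoc : Odd c) :
    Irreducible (X ^ a + X ^ b + X ^ c - 1 : ℤ[X]) := by
  have hoa' := hoa; have hob' := hob; have hoc' := hoc
  obtain ⟨a2, ha2⟩ := hoa; obtain ⟨b2, hb2⟩ := hob; obtain ⟨c2, hc2⟩ := hoc
  set F : ℤ[X] := X ^ a + X ^ b + X ^ c - 1 with hF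
  have hF4 : F = C 1 * X ^ a + C 1 * X ^ b + C 1 * X ^ c + C (-1) := by
    rw [hF]; simp only [map_one, map_neg]; ring
  have hFdeg : F.natDegree = a := by rw [hF4]; exact natDegree_quad a b c hcb hba one_ne_zero
  have hmF : F.mirror = C (-1) * X ^ a + C 1 * X ^ (a - c) + C 1 * X ^ (a - b) + C 1 :=
    mirror_quad F a b c hcb hba hc hF4 one_ne_zero (by norm_num)
  have hmF' : F.mirror = 1 + X ^ (a - c) + X ^ (a - b) - X ^ a := by
    rw [hmF]; simp only [map_one, map_neg]; ring
  have hF0 : F.coeff 0 = -1 := by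
    rw [hF4]
    simp [coeff_X_pow, coeff_one, if_neg (by omega : ¬ (0:ℕ) = a), if_neg (by omega : ¬ (0:ℕ) = b),
      if_neg (by omega : ¬ (0:ℕ) = c)]
  have hFlead : F.leadingCoeff = 1 := by
    rw [Polynomial.leadingCoeff, hFdeg, hF4]
    simp [coeff_X_pow, coeff_one, if_neg (by omega : ¬ a = b), if_neg (by omega : ¬ a = c),
      if_neg (by omega : ¬ a = 0)]
  have hFmonic : F.Monic := hFlead
  have hF0ne : F ≠ 0 := hFmonic.ne_zero
  -- the big expansion of F * F.mirror
  have hEXP : F * F.mirror =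
      X ^ (a + (a - c)) + X ^ (a + (a - b)) + X ^ a - X ^ (a + a)
      + X ^ (b + (a - c)) + X ^ (b + (a - b)) + X ^ b - X ^ (b + a)
      + X ^ (c + (a - c)) + X ^ (c + (a - b)) + X ^ c - X ^ (c + a)
      - X ^ (a - c) - X ^ (a - b) - 1 + X ^ a := by
    rw [hmF']; rw [hF]; ring
  have hcA : (F * F.mirror).coeff a = 4 := by
    rw [hEXP]
    simp only [coeff_add, coeff_sub, coeff_X_pow, coeff_one]
    rw [if_neg (by omega : ¬ a = a + (a - c)), if_neg (by omega : ¬ a = a + (a - b)),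
      if_neg (by omega : ¬ a = a + a),
      if_neg (by omega : ¬ a = b + (a - c)), if_pos (by omega : a = b + (a - b)),
      if_neg (by omega : ¬ a = b), if_neg (by omega : ¬ a = b + a),
      if_pos (by omega : a = c + (a - c)), if_neg (by omega : ¬ a = c + (a - b)),
      if_neg (by omega : ¬ a = c), if_neg (by omega : ¬ a = c + a),
      if_neg (by omega : ¬ a = a - c), if_neg (by omega : ¬ a = a - b),
      if_neg (by omega : ¬ a = 0)]
    norm_num
  have hcB : (F * F.mirror).coeff (a + b) = -1 := by
    rw [hEXP]
    simp only [coeff_add, coeff_sub, coeff_X_pow, coeff_one]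
    rw [if_neg (by omega : ¬ a + b = a + (a - c)), if_neg (by omega : ¬ a + b = a + (a - b)),
      if_neg (by omega : ¬ a + b = a), if_neg (by omega : ¬ a + b = a + a),
      if_neg (by omega : ¬ a + b = b + (a - c)), if_neg (by omega : ¬ a + b = b + (a - b)),
      if_neg (by omega : ¬ a + b = b), if_pos (by omega : a + b = b + a),
      if_neg (by omega : ¬ a + b = c + (a - c)), if_neg (by omega : ¬ a + b = c + (a - b)),
      if_neg (by omega : ¬ a + b = c), if_neg (by omega : ¬ a + b = c + a),
      if_neg (by omega : ¬ a + b = a - c), if_neg (by omega : ¬ a + b = a - b),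
      if_neg (by omega : ¬ a + b = 0)]
    norm_num
  have hcC : (F * F.mirror).coeff (a + c) = -1 := by
    rw [hEXP]
    simp only [coeff_add, coeff_sub, coeff_X_pow, coeff_one]
    rw [if_neg (by omega : ¬ a + c = a + (a - c)), if_neg (by omega : ¬ a + c = a + (a - b)),
      if_neg (by omega : ¬ a + c = a), if_neg (by omega : ¬ a + c = a + a),
      if_neg (by omega : ¬ a + c = b + (a - c)), if_neg (by omega : ¬ a + c = b + (a - b)),
      if_neg (by omega : ¬ a + c = b), if_neg (by omega : ¬ a + c = b + a),
      if_neg (by omega : ¬ a + c = c + (a - c)), if_neg (by omega : ¬ a + c = c + (a - b)),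
      if_neg (by omega : ¬ a + c = c), if_pos (by omega : a + c = c + a),
      if_neg (by omega : ¬ a + c = a - c), if_neg (by omega : ¬ a + c = a - b),
      if_neg (by omega : ¬ a + c = 0)]
    norm_num
  have hFe1 : F.eval 1 = 2 := by rw [hF]; simp
  have hFme1 : F.mirror.eval 1 = 2 := by rw [hmF']; simp
  have hFen : F.eval (-1) = -4 := by
    rw [hF]
    simp [hoa'.neg_one_pow, hob'.neg_one_pow, hoc'.neg_one_pow]
  have hFmen : F.mirror.eval (-1) = 4 := by
    rw [hmF']
    simp [Even.neg_one_pow (Nat.Odd.sub_odd hoa' hoc'),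
      Even.neg_one_pow (Nat.Odd.sub_odd hoa' hob'), hoa'.neg_one_pow]
  constructor
  · exact fun hu => (Polynomial.not_isUnit_of_natDegree_pos F (by omega)) hu
  intro g h hGH
  by_contra hcon
  push_neg at hcon
  obtain ⟨hgu, hhu⟩ := hcon
  have hg0 : g ≠ 0 := by rintro rfl; rw [zero_mul] at hGH; exact hF0ne hGH
  have hh0 : h ≠ 0 := by rintro rfl; rw [mul_zero] at hGH; exact hF0ne hGH
  have hlead : g.leadingCoeff * h.leadingCoeff = 1 := by
    rw [← leadingCoeff_mul, ← hGH, hFlead]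
  have hconst : g.coeff 0 * h.coeff 0 = -1 := by rw [← mul_coeff_zero, ← hGH, hF0]
  have hdg : g.natDegree + h.natDegree = a := by rw [← natDegree_mul hg0 hh0, ← hGH, hFdeg]
  have hgd : 0 < g.natDegree := by
    rcases Nat.eq_zero_or_pos g.natDegree with h' | h'
    swap
    · exact h'
    · exfalso
      apply hgu
      rw [Polynomial.eq_C_of_natDegree_eq_zero h']
      refine isUnit_C.mpr (IsUnit.of_mul_eq_one h.leadingCoeff ?_)
      have e : g.coeff 0 = g.leadingCoeff := by rw [Polynomial.leadingCoeff, h']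
      rw [e]; exact hlead
  have hhd : 0 < h.natDegree := by
    rcases Nat.eq_zero_or_pos h.natDegree with h' | h'
    swap
    · exact h'
    · exfalso
      apply hhu
      rw [Polynomial.eq_C_of_natDegree_eq_zero h']
      refine isUnit_C.mpr (IsUnit.of_mul_eq_one g.leadingCoeff ?_)
      have e : h.coeff 0 = h.leadingCoeff := by rw [Polynomial.leadingCoeff, h']
      rw [e, mul_comm]; exact hlead
  have hg0c : g.coeff 0 ≠ 0 := by intro e; rw [e, zero_mul] at hconst; norm_num at hconst
  have hh0c : h.coeff 0 ≠ 0 := by intro e; rw [e, mul_zero] at hconst; norm_num at hconst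
  have hgL : g.leadingCoeff ≠ 0 := leadingCoeff_ne_zero.mpr hg0
  have hhL : h.leadingCoeff ≠ 0 := leadingCoeff_ne_zero.mpr hh0
  have hht : h.natTrailingDegree = 0 := by rw [natTrailingDegree_eq_zero]; right; exact hh0c
  have hmh0 : h.mirror ≠ 0 := fun e => hh0 (mirror_eq_zero.mp e)
  set G : ℤ[X] := g * h.mirror with hGdef
  have hG0 : G ≠ 0 := mul_ne_zero hg0 hmh0
  have hGdeg : G.natDegree = a := by
    rw [hGdef, natDegree_mul hg0 hmh0, mirror_natDegree, hdg]
  have hG0c : G.coeff 0 = g.coeff 0 * h.leadingCoeff := by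
    rw [hGdef, mul_coeff_zero]
    congr 1
    have := mirror_trailingCoeff h
    rwa [Polynomial.trailingCoeff, mirror_natTrailingDegree, hht] at this
  have hG0ne : G.coeff 0 ≠ 0 := by rw [hG0c]; exact mul_ne_zero hg0c hhL
  have hGt : G.natTrailingDegree = 0 := by rw [natTrailingDegree_eq_zero]; right; exact hG0ne
  have hGm : G.mirror = g.mirror * h := by rw [hGdef, mirror_mul_of_domain, mirror_mirror]
  have hGGm : G * G.mirror = F * F.mirror := by
    rw [hGm, hGdef, hGH, mirror_mul_of_domain]; ring
  have hGlead : G.coeff a = g.leadingCoeff * h.coeff 0 := by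
    have : G.coeff a = G.leadingCoeff := by rw [Polynomial.leadingCoeff, hGdeg]
    rw [this, hGdef, leadingCoeff_mul]
    congr 1
    rw [mirror_leadingCoeff, Polynomial.trailingCoeff, hht]
  have hGleadne : G.coeff a ≠ 0 := by rw [hGlead]; exact mul_ne_zero hgL hh0c
  -- sum of squares of G's coefficients is 4
  have hsum : ∑ n ∈ G.support, G.coeff n ^ 2 = 4 := by
    have h1 := coeff_mul_mirror G
    rw [hGdeg, hGt, add_zero, hGGm, hcA] at h1
    rw [Polynomial.sum_def] at h1
    exact h1.symm
  have claimA : ∀ n ∈ G.support, G.coeff n ^ 2 = 1 := by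
    intro n hn
    by_contra hne
    have hb1 : ∀ m ∈ G.support, 1 ≤ G.coeff m ^ 2 := by
      intro m hm
      exact int_sq_ge_one (mem_support_iff.mp hm)
    have hb4 : 4 ≤ G.coeff n ^ 2 := by
      exact int_sq_ge_four (mem_support_iff.mp hn) hne
    have h0mem : (0:ℕ) ∈ G.support := mem_support_iff.mpr hG0ne
    have hamem : a ∈ G.support := mem_support_iff.mpr hGleadne
    have hex : ∃ m ∈ G.support, m ≠ n := by
      by_cases hn0 : n = 0
      · exact ⟨a, hamem, by omega⟩
      · exact ⟨0, h0mem, fun e => hn0 e.symm⟩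
    obtain ⟨m, hm, hmn⟩ := hex
    have hsubset : ({n, m} : Finset ℕ) ⊆ G.support := by
      intro x hx
      rcases Finset.mem_insert.mp hx with rfl | hx
      · exact hn
      · rw [Finset.mem_singleton.mp hx]; exact hm
    have hle : ∑ k ∈ ({n, m} : Finset ℕ), G.coeff k ^ 2 ≤ ∑ k ∈ G.support, G.coeff k ^ 2 :=
      Finset.sum_le_sum_of_subset_of_nonneg hsubset (fun k _ _ => sq_nonneg _)
    rw [Finset.sum_pair (fun e => hmn e.symm), hsum] at hle
    have h9 : (5:ℤ) ≤ G.coeff n ^ 2 + G.coeff m ^ 2 := by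
      have := add_le_add hb4 (hb1 m hm)
      exact le_trans (by norm_num) this
    exact absurd hle (not_le.mpr (lt_of_lt_of_le (by norm_num) h9))
  have claimB : G.support.card = 4 := by
    have h1 : ∑ n ∈ G.support, (1:ℤ) = 4 := by
      rw [← hsum]; exact Finset.sum_congr rfl (fun n hn => (claimA n hn).symm)
    rw [Finset.sum_const, nsmul_eq_mul, mul_one] at h1
    exact_mod_cast h1
  have h0mem : (0:ℕ) ∈ G.support := mem_support_iff.mpr hG0ne
  have hamem : a ∈ G.support := mem_support_iff.mpr hGleadne
  have hTex : ∃ i j, j < i ∧ (G.support \ {0, a}) = {i, j} := by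
    have hTcard : (G.support \ {0, a}).card = 2 := by
      rw [Finset.card_sdiff_of_subset]
      · rw [claimB]
        have : ({0, a} : Finset ℕ).card = 2 := by
          rw [Finset.card_insert_of_notMem (by simp; omega), Finset.card_singleton]
        rw [this]
      · intro x hx
        rcases Finset.mem_insert.mp hx with rfl | hx
        · exact h0mem
        · rw [Finset.mem_singleton.mp hx]; exact hamem
    obtain ⟨i, j, hij, hT⟩ := Finset.card_eq_two.mp hTcard
    rcases hij.lt_or_gt with h' | h'
    · exact ⟨j, i, h', by rw [hT, Finset.pair_comm]⟩
    · exact ⟨i, j, h', hT⟩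
  obtain ⟨i, j, hji, hT⟩ := hTex
  have himem : i ∈ G.support := by
    have : i ∈ G.support \ {0, a} := by rw [hT]; exact Finset.mem_insert_self i {j}
    exact (Finset.mem_sdiff.mp this).1
  have hjmem : j ∈ G.support := by
    have : j ∈ G.support \ {0, a} := by
      rw [hT]; exact Finset.mem_insert_of_mem (Finset.mem_singleton_self j)
    exact (Finset.mem_sdiff.mp this).1
  have hinot : i ≠ 0 ∧ i ≠ a := by
    have : i ∈ G.support \ {0, a} := by rw [hT]; exact Finset.mem_insert_self i {j}
    have h2 := Finset.mem_sdiff.mp this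
    simpa using h2.2
  have hjnot : j ≠ 0 ∧ j ≠ a := by
    have : j ∈ G.support \ {0, a} := by
      rw [hT]; exact Finset.mem_insert_of_mem (Finset.mem_singleton_self j)
    have h2 := Finset.mem_sdiff.mp this
    simpa using h2.2
  have hile : i ≤ a := by
    have := le_natDegree_of_ne_zero (mem_support_iff.mp himem); omega
  have hia : i < a := by omega
  have h0j : 0 < j := by omega
  have hsupp : G.support = {a, i, j, 0} := by
    have hsub : ({a, i, j, 0} : Finset ℕ) ⊆ G.support := by
      intro x hx
      simp only [Finset.mem_insert, Finset.mem_singleton] at hx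
      rcases hx with rfl | rfl | rfl | rfl
      · exact hamem
      · exact himem
      · exact hjmem
      · exact h0mem
    have hcard : ({a, i, j, 0} : Finset ℕ).card = 4 := by
      rw [Finset.card_insert_of_notMem (by simp; omega),
        Finset.card_insert_of_notMem (by simp; omega),
        Finset.card_insert_of_notMem (by simp; omega), Finset.card_singleton]
    exact (Finset.eq_of_subset_of_card_le hsub (by rw [claimB, hcard])).symm
  set da := G.coeff a with hda_def
  set di := G.coeff i with hdi_def
  set dj := G.coeff j with hdj_def
  set d0 := G.coeff 0 with hd0_def
  have hda2 : da ^ 2 = 1 := claimA a hamem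
  have hdi2 : di ^ 2 = 1 := claimA i himem
  have hdj2 : dj ^ 2 = 1 := claimA j hjmem
  have hd02 : d0 ^ 2 = 1 := claimA 0 h0mem
  have hGf : G = C da * X ^ a + C di * X ^ i + C dj * X ^ j + C d0 := by
    conv_lhs => rw [G.as_sum_support_C_mul_X_pow]
    rw [hsupp, Finset.sum_insert (by simp; omega), Finset.sum_insert (by simp; omega),
      Finset.sum_insert (by simp; omega), Finset.sum_singleton, pow_zero, mul_one]
    rw [← hda_def, ← hdi_def, ← hdj_def, ← hd0_def]; ring
  have hda0 : da ≠ 0 := hGleadne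
  have hd00 : d0 ≠ 0 := hG0ne
  have hmG : G.mirror = C d0 * X ^ a + C dj * X ^ (a - j) + C di * X ^ (a - i) + C da :=
    mirror_quad G a i j hji hia h0j hGf hda0 hd00
  -- evaluations at 1 and -1
  have hE1 : (da + di + dj + d0) * (d0 + dj + di + da) = 4 := by
    have e1 : G.eval 1 = da + di + dj + d0 := by
      rw [hGf]; simp only [eval_add, eval_mul, eval_C, eval_pow, eval_X, one_pow, mul_one]
    have e2 : G.mirror.eval 1 = d0 + dj + di + da := by
      rw [hmG]; simp only [eval_add, eval_mul, eval_C, eval_pow, eval_X, one_pow, mul_one]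
    have e3 : G.eval 1 * G.mirror.eval 1 = F.eval 1 * F.mirror.eval 1 := by
      rw [← eval_mul, ← eval_mul, hGGm]
    rw [e1, e2, hFe1, hFme1] at e3
    linear_combination e3
  have hmai : (-1:ℤ) ^ (a - i) * (-1) ^ i = -1 := by
    rw [← pow_add, show a - i + i = a by omega, hoa'.neg_one_pow]
  have hmaj : (-1:ℤ) ^ (a - j) * (-1) ^ j = -1 := by
    rw [← pow_add, show a - j + j = a by omega, hoa'.neg_one_pow]
  have hEm : (-da + di * (-1) ^ i + dj * (-1) ^ j + d0) *
      (-d0 + dj * (-1) ^ (a - j) + di * (-1) ^ (a - i) + da) = -16 := by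
    have e1 : G.eval (-1) = -da + di * (-1) ^ i + dj * (-1) ^ j + d0 := by
      rw [hGf]; simp only [eval_add, eval_mul, eval_C, eval_pow, eval_X]
      rw [hoa'.neg_one_pow]; ring
    have e2 : G.mirror.eval (-1) = -d0 + dj * (-1) ^ (a - j) + di * (-1) ^ (a - i) + da := by
      rw [hmG]; simp only [eval_add, eval_mul, eval_C, eval_pow, eval_X]
      rw [hoa'.neg_one_pow]; ring
    have e3 : G.eval (-1) * G.mirror.eval (-1) = F.eval (-1) * F.mirror.eval (-1) := by
      rw [← eval_mul, ← eval_mul, hGGm]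
    rw [e1, e2, hFen, hFmen] at e3
    linear_combination e3
  obtain ⟨hdidj, hd0da, heidi, hejdj⟩ :=
    sign_bash da di dj d0 ((-1:ℤ) ^ i) ((-1:ℤ) ^ j) ((-1:ℤ) ^ (a - i)) ((-1:ℤ) ^ (a - j))
      (sq_pm da hda2) (sq_pm di hdi2) (sq_pm dj hdj2) (sq_pm d0 hd02)
      (neg_one_pow_pm i) (neg_one_pow_pm j) hmai hmaj hE1 hEm
  have hCda : C da * C da = (1:ℤ[X]) := by
    rw [← C_mul]
    rcases sq_pm da hda2 with h' | h' <;> rw [h'] <;> norm_num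
  have hcase : di = da ∨ di = -da := by
    rcases sq_pm da hda2 with h' | h' <;> rcases sq_pm di hdi2 with h'' | h'' <;> omega
  rcases hcase with hdida | hdida
  · -- Case 1 : G = ± F shape, i j odd
    have hdjda : dj = da := by rw [← hdidj, hdida]
    have hei_neg : (-1:ℤ) ^ i = -1 := by
      rcases neg_one_pow_pm i with h'' | h''
      · exfalso
        rw [h'', one_mul, hdida] at heidi
        rcases sq_pm da hda2 with h' | h' <;> omega
      · exact h''
    have hej_neg : (-1:ℤ) ^ j = -1 := by
      rcases neg_one_pow_pm j with h'' | h''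
      · exfalso
        rw [h'', one_mul, hdjda] at hejdj
        rcases sq_pm da hda2 with h' | h' <;> omega
      · exact h''
    have hiodd : Odd i := by
      rcases Nat.even_or_odd i with h' | h'
      · rw [h'.neg_one_pow] at hei_neg; norm_num at hei_neg
      · exact h'
    have hjodd : Odd j := by
      rcases Nat.even_or_odd j with h' | h'
      · rw [h'.neg_one_pow] at hej_neg; norm_num at hej_neg
      · exact h'
    obtain ⟨i2, hi2⟩ := hiodd
    obtain ⟨j2, hj2⟩ := hjodd
    have hGf1 : G = C da * X ^ a + C da * X ^ i + C da * X ^ j + C (-da) := by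
      rw [hGf, hdida, hdjda, show d0 = -da from hd0da]
    have hmG1 : G.mirror = C (-da) * X ^ a + C da * X ^ (a - j) + C da * X ^ (a - i) + C da :=
      mirror_quad G a i j hji hia h0j hGf1 hda0 (neg_ne_zero.mpr hda0)
    have hprod1 : ((X ^ a + X ^ i + X ^ j - 1) * (1 + X ^ (a - j) + X ^ (a - i) - X ^ a) : ℤ[X])
        = F * F.mirror := by
      rw [← hGGm, hmG1, hGf1, map_neg]
      linear_combination (norm := ring)
        (-((X ^ a + X ^ i + X ^ j - 1) * (1 + X ^ (a - j) + X ^ (a - i) - X ^ a) : ℤ[X])) * hCda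
    have hexp1 : ((X ^ a + X ^ i + X ^ j - 1) * (1 + X ^ (a - j) + X ^ (a - i) - X ^ a) : ℤ[X]) =
        X ^ (a + (a - j)) + X ^ (a + (a - i)) + X ^ a - X ^ (a + a)
        + X ^ (i + (a - j)) + X ^ (i + (a - i)) + X ^ i - X ^ (i + a)
        + X ^ (j + (a - j)) + X ^ (j + (a - i)) + X ^ j - X ^ (j + a)
        - X ^ (a - j) - X ^ (a - i) - 1 + X ^ a := by ring
    have hpinc : c = i ∨ c = j := by
      by_contra hcc
      push_neg at hcc
      obtain ⟨hci, hcj⟩ := hcc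
      have h1 : ((X ^ a + X ^ i + X ^ j - 1) * (1 + X ^ (a - j) + X ^ (a - i) - X ^ a) : ℤ[X]).coeff (a+c) = -1 := by
        rw [hprod1, hcC]
      rw [hexp1] at h1
      simp only [coeff_add, coeff_sub, coeff_X_pow, coeff_one] at h1
      rw [if_neg (by omega : ¬ a + c = a + (a - j)), if_neg (by omega : ¬ a + c = a + (a - i)),
        if_neg (by omega : ¬ a + c = a), if_neg (by omega : ¬ a + c = a + a),
        if_neg (by omega : ¬ a + c = i + (a - j)), if_neg (by omega : ¬ a + c = i + (a - i)),
        if_neg (by omega : ¬ a + c = i), if_neg (by omega : ¬ a + c = i + a),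
        if_neg (by omega : ¬ a + c = j + (a - j)), if_neg (by omega : ¬ a + c = j + (a - i)),
        if_neg (by omega : ¬ a + c = j), if_neg (by omega : ¬ a + c = j + a),
        if_neg (by omega : ¬ a + c = a - j), if_neg (by omega : ¬ a + c = a - i),
        if_neg (by omega : ¬ a + c = 0)] at h1
      norm_num at h1
    have hpinb : b = i ∨ b = j := by
      by_contra hcc
      push_neg at hcc
      obtain ⟨hbi, hbj⟩ := hcc
      have h1 : ((X ^ a + X ^ i + X ^ j - 1) * (1 + X ^ (a - j) + X ^ (a - i) - X ^ a) : ℤ[X]).coeff (a+b) = -1 := by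
        rw [hprod1, hcB]
      rw [hexp1] at h1
      simp only [coeff_add, coeff_sub, coeff_X_pow, coeff_one] at h1
      rw [if_neg (by omega : ¬ a + b = a + (a - j)), if_neg (by omega : ¬ a + b = a + (a - i)),
        if_neg (by omega : ¬ a + b = a), if_neg (by omega : ¬ a + b = a + a),
        if_neg (by omega : ¬ a + b = i + (a - j)), if_neg (by omega : ¬ a + b = i + (a - i)),
        if_neg (by omega : ¬ a + b = i), if_neg (by omega : ¬ a + b = i + a),
        if_neg (by omega : ¬ a + b = j + (a - j)), if_neg (by omega : ¬ a + b = j + (a - i)),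
        if_neg (by omega : ¬ a + b = j), if_neg (by omega : ¬ a + b = j + a),
        if_neg (by omega : ¬ a + b = a - j), if_neg (by omega : ¬ a + b = a - i),
        if_neg (by omega : ¬ a + b = 0)] at h1
      norm_num at h1
    have hbicj : b = i ∧ c = j := by omega
    have hXF : (X ^ a + X ^ i + X ^ j - 1 : ℤ[X]) = F := by
      rw [hF, hbicj.1, hbicj.2]
    have hGF : G = C da * F := by rw [hGf1, ← hXF, map_neg]; ring
    have hmirror_h : h.mirror = C da * h := by
      apply mul_left_cancel₀ hg0
      rw [← hGdef, hGF, hGH]; ring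
    refine factor_contra a b c hc hcb hba hoa' hob' hoc' h hhd ?_
    intro z hzk
    constructor
    · have h1 : aeval z F = 0 := by rw [hGH, map_mul, hzk, mul_zero]
      simp only [hF, map_add, map_sub, map_pow, aeval_X, map_one] at h1
      exact h1
    · have h2 : aeval z F.mirror = 0 := by
        rw [show F.mirror = g.mirror * h.mirror from by rw [hGH, mirror_mul_of_domain],
          map_mul, hmirror_h, map_mul, hzk, mul_zero, mul_zero]
      simp only [hmF', map_add, map_sub, map_one, map_pow, aeval_X] at h2
      exact h2
  · -- Case 2 : G = ± mirror F shape, i j even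
    have hdjda : dj = -da := by rw [← hdidj, hdida]
    have hei_pos : (-1:ℤ) ^ i = 1 := by
      rcases neg_one_pow_pm i with h'' | h''
      · exact h''
      · exfalso
        rw [h'', hdida] at heidi
        rcases sq_pm da hda2 with h' | h' <;> omega
    have hej_pos : (-1:ℤ) ^ j = 1 := by
      rcases neg_one_pow_pm j with h'' | h''
      · exact h''
      · exfalso
        rw [h'', hdjda] at hejdj
        rcases sq_pm da hda2 with h' | h' <;> omega
    have hieven : Even i := by
      rcases Nat.even_or_odd i with h' | h'
      · exact h'
      · rw [h'.neg_one_pow] at hei_pos; norm_num at hei_pos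
    have hjeven : Even j := by
      rcases Nat.even_or_odd j with h' | h'
      · exact h'
      · rw [h'.neg_one_pow] at hej_pos; norm_num at hej_pos
    obtain ⟨i2, hi2⟩ := hieven
    obtain ⟨j2, hj2⟩ := hjeven
    have hGf2 : G = C da * X ^ a + C (-da) * X ^ i + C (-da) * X ^ j + C (-da) := by
      rw [hGf, hdida, hdjda, show d0 = -da from hd0da]
    have hmG2 : G.mirror = C (-da) * X ^ a + C (-da) * X ^ (a - j) + C (-da) * X ^ (a - i) + C da :=
      mirror_quad G a i j hji hia h0j hGf2 hda0 (neg_ne_zero.mpr hda0)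
    have hprod2 : ((X ^ a - X ^ i - X ^ j - 1) * (1 - X ^ (a - j) - X ^ (a - i) - X ^ a) : ℤ[X])
        = F * F.mirror := by
      rw [← hGGm, hmG2, hGf2, map_neg]
      linear_combination (norm := ring)
        (-((X ^ a - X ^ i - X ^ j - 1) * (1 - X ^ (a - j) - X ^ (a - i) - X ^ a) : ℤ[X])) * hCda
    have hexp2 : ((X ^ a - X ^ i - X ^ j - 1) * (1 - X ^ (a - j) - X ^ (a - i) - X ^ a) : ℤ[X]) =
        X ^ a - X ^ (a + (a - j)) - X ^ (a + (a - i)) - X ^ (a + a)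
        - X ^ i + X ^ (i + (a - j)) + X ^ (i + (a - i)) + X ^ (i + a)
        - X ^ j + X ^ (j + (a - j)) + X ^ (j + (a - i)) + X ^ (j + a)
        - 1 + X ^ (a - j) + X ^ (a - i) + X ^ a := by ring
    have hpinc : a - c = i ∨ a - c = j := by
      by_contra hcc
      push_neg at hcc
      obtain ⟨hci, hcj⟩ := hcc
      have h1 : ((X ^ a - X ^ i - X ^ j - 1) * (1 - X ^ (a - j) - X ^ (a - i) - X ^ a) : ℤ[X]).coeff (a+c) = -1 := by
        rw [hprod2, hcC]
      rw [hexp2] at h1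
      simp only [coeff_add, coeff_sub, coeff_X_pow, coeff_one] at h1
      rw [if_neg (by omega : ¬ a + c = a), if_neg (by omega : ¬ a + c = a + (a - j)),
        if_neg (by omega : ¬ a + c = a + (a - i)), if_neg (by omega : ¬ a + c = a + a),
        if_neg (by omega : ¬ a + c = i), if_neg (by omega : ¬ a + c = i + (a - j)),
        if_neg (by omega : ¬ a + c = i + (a - i)), if_neg (by omega : ¬ a + c = i + a),
        if_neg (by omega : ¬ a + c = j), if_neg (by omega : ¬ a + c = j + (a - j)),
        if_neg (by omega : ¬ a + c = j + (a - i)), if_neg (by omega : ¬ a + c = j + a),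
        if_neg (by omega : ¬ a + c = 0), if_neg (by omega : ¬ a + c = a - j),
        if_neg (by omega : ¬ a + c = a - i)] at h1
      norm_num at h1
    have hpinb : a - b = i ∨ a - b = j := by
      by_contra hcc
      push_neg at hcc
      obtain ⟨hbi, hbj⟩ := hcc
      have h1 : ((X ^ a - X ^ i - X ^ j - 1) * (1 - X ^ (a - j) - X ^ (a - i) - X ^ a) : ℤ[X]).coeff (a+b) = -1 := by
        rw [hprod2, hcB]
      rw [hexp2] at h1
      simp only [coeff_add, coeff_sub, coeff_X_pow, coeff_one] at h1
      rw [if_neg (by omega : ¬ a + b = a), if_neg (by omega : ¬ a + b = a + (a - j)),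
        if_neg (by omega : ¬ a + b = a + (a - i)), if_neg (by omega : ¬ a + b = a + a),
        if_neg (by omega : ¬ a + b = i), if_neg (by omega : ¬ a + b = i + (a - j)),
        if_neg (by omega : ¬ a + b = i + (a - i)), if_neg (by omega : ¬ a + b = i + a),
        if_neg (by omega : ¬ a + b = j), if_neg (by omega : ¬ a + b = j + (a - j)),
        if_neg (by omega : ¬ a + b = j + (a - i)), if_neg (by omega : ¬ a + b = j + a),
        if_neg (by omega : ¬ a + b = 0), if_neg (by omega : ¬ a + b = a - j),
        if_neg (by omega : ¬ a + b = a - i)] at h1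
      norm_num at h1
    have hieq : i = a - c ∧ j = a - b := by omega
    have hXF2 : (X ^ a - X ^ i - X ^ j - 1 : ℤ[X]) = -(F.mirror) := by
      rw [hmF', hieq.1, hieq.2]; ring
    have hGF2 : G = C (-da) * F.mirror := by
      rw [hGf2, map_neg]
      have : (C da * X ^ a + -C da * X ^ i + -C da * X ^ j + -C da : ℤ[X])
          = C da * (X ^ a - X ^ i - X ^ j - 1) := by ring
      rw [this, hXF2]; ring
    have hmirror_g : g = C (-da) * g.mirror := by
      apply mul_right_cancel₀ hmh0
      have hFm2 : F.mirror = g.mirror * h.mirror := by rw [hGH, mirror_mul_of_domain]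
      rw [← hGdef, hGF2, hFm2]; ring
    refine factor_contra a b c hc hcb hba hoa' hob' hoc' g hgd ?_
    intro z hzk
    have hzgm : aeval z g.mirror = 0 := by
      have h1 := congrArg (aeval z : ℤ[X] →ₐ[ℤ] ℂ) hmirror_g
      rw [hzk, map_mul, aeval_C] at h1
      rcases mul_eq_zero.mp h1.symm with h2 | h2
      · exfalso
        apply hda0
        have h3 : ((-da : ℤ) : ℂ) = 0 := by simpa using h2
        have h4 : (-da : ℤ) = 0 := by exact_mod_cast h3
        omega
      · exact h2
    constructor
    · have h1 : aeval z F = 0 := by rw [hGH, map_mul, hzk, zero_mul]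
      simp only [hF, map_add, map_sub, map_pow, aeval_X, map_one] at h1
      exact h1
    · have h2 : aeval z F.mirror = 0 := by
        rw [show F.mirror = g.mirror * h.mirror from by rw [hGH, mirror_mul_of_domain],
          map_mul, hzgm, zero_mul]
      simp only [hmF', map_add, map_sub, map_one, map_pow, aeval_X] at h2
      exact h2
lemma key_rat' (a b c : ℕ) (hc : 0 < c) (hcb : c < b) (hba : b < a)
    (hoa : Odd a) (hob : Odd b) (hoc : Odd c) :
    Irreducible (X ^ a + X ^ b + X ^ c - 1 : ℚ[X]) := by
  have hZ : Irreducible (X ^ a + X ^ b + X ^ c - 1 : ℤ[X]) :=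
    key_int a b c hc hcb hba hoa hob hoc
  have hprim : (X ^ a + X ^ b + X ^ c - 1 : ℤ[X]).IsPrimitive := by
    apply Polynomial.Monic.isPrimitive
    have hF4 : (X ^ a + X ^ b + X ^ c - 1 : ℤ[X])
        = C 1 * X ^ a + C 1 * X ^ b + C 1 * X ^ c + C (-1) := by
      simp only [map_one, map_neg]; ring
    have hdeg : (X ^ a + X ^ b + X ^ c - 1 : ℤ[X]).natDegree = a := by
      rw [hF4]; exact natDegree_quad a b c hcb hba one_ne_zero
    unfold Monic
    rw [Polynomial.leadingCoeff, hdeg, hF4]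
    simp [coeff_X_pow, coeff_one, if_neg (by omega : ¬ a = b), if_neg (by omega : ¬ a = c),
      if_neg (by omega : ¬ a = 0)]
  rw [IsPrimitive.Int.irreducible_iff_irreducible_map_cast hprim] at hZ
  have e : (X ^ a + X ^ b + X ^ c - 1 : ℚ[X])
      = (X ^ a + X ^ b + X ^ c - 1 : ℤ[X]).map (Int.castRingHom ℚ) := by
    simp
  rw [e]; exact hZ

open Polynomial in
theorem stmt_8 (a b c : ℕ) (ha : 0 < a) (hb : 0 < b) (hc : 0 < c)
    (hoa : Odd a) (hob : Odd b) (hoc : Odd c)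
    (hab : a ≠ b) (hac : a ≠ c) (hbc : b ≠ c) :
    Irreducible (X^a + X^b + X^c - 1 : Polynomial ℚ) := by
  have H : ∀ x y z : ℕ, Odd x → Odd y → Odd z → 0 < z → z < y → y < x →
      Irreducible (X ^ x + X ^ y + X ^ z - 1 : ℚ[X]) := fun x y z ox oy oz hz hzy hyx =>
    key_rat' x y z hz hzy hyx ox oy oz
  have horder : (c<b∧b<a) ∨ (b<c∧c<a) ∨ (c<a∧a<b) ∨ (a<c∧c<b) ∨ (b<a∧a<c) ∨ (a<b∧b<c) := by
    omega
  rcases horder with ⟨h1,h2⟩|⟨h1,h2⟩|⟨h1,h2⟩|⟨h1,h2⟩|⟨h1,h2⟩|⟨h1,h2⟩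
  · exact H a b c hoa hob hoc hc h1 h2
  · rw [show (X^a+X^b+X^c-1:ℚ[X]) = X^a + X^c + X^b - 1 by ring]
    exact H a c b hoa hoc hob hb h1 h2
  · rw [show (X^a+X^b+X^c-1:ℚ[X]) = X^b + X^a + X^c - 1 by ring]
    exact H b a c hob hoa hoc hc h1 h2
  · rw [show (X^a+X^b+X^c-1:ℚ[X]) = X^b + X^c + X^a - 1 by ring]
    exact H b c a hob hoc hoa ha h1 h2
  · rw [show (X^a+X^b+X^c-1:ℚ[X]) = X^c + X^a + X^b - 1 by ring]
    exact H c a b hoc hoa hob hb h1 h2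
  · rw [show (X^a+X^b+X^c-1:ℚ[X]) = X^c + X^b + X^a - 1 by ring]
    exact H c b a hoc hob hoa ha h1 h2
end

section
/- Let a = b + c with b, c positive integers and a = b + c, gcd(b, c) = 1. If η is a complex root of unity with η^b = 1 or η^b = -1 or η^c = 1 or η^c = -1, then η^a + η^b + η^c - 1 ≠ 0. -/
theorem stmt_11 (a b c : ℕ) (hb : 0 < b) (hc : 0 < c) (habc : a = b + c)
    (hgcd : Nat.gcd b c = 1) (η : ℂ) (hroot : ∃ n : ℕ, 1 ≤ n ∧ η^n = 1)
    (h : η^b = 1 ∨ η^b = -1 ∨ η^c = 1 ∨ η^c = -1) :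
    η^a + η^b + η^c - 1 ≠ 0 := by
  obtain ⟨n, hn, hηn⟩ := hroot
  have hη0 : η ≠ 0 := by
    intro h0
    rw [h0, zero_pow (by omega)] at hηn
    exact zero_ne_one hηn
  have hpow : η ^ a = η ^ b * η ^ c := by rw [habc, pow_add]
  have hb0 : η ^ b ≠ 0 := pow_ne_zero _ hη0
  have hc0 : η ^ c ≠ 0 := pow_ne_zero _ hη0
  rcases h with h1 | h1 | h1 | h1 <;> rw [hpow, h1] <;> intro hh
  · apply hc0; linear_combination hh / 2
  · norm_num at hh
  · apply hb0; linear_combination hh / 2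
  · ring_nf at hh; norm_num at hh
end

section
/- There are no positive integers d > e and a > b > c with a = b + c such that x^a + x^b + x^c - 1 = (x + 1)(x^d + x^e - 1) as polynomials over the integers. -/
open Polynomial in
theorem stmt_13 : ¬ ∃ a b c d e : ℕ, 0 < c ∧ 0 < e ∧ c < b ∧ b < a ∧ e < d ∧
    a = b + c ∧
    (X^a + X^b + X^c - 1 : Polynomial ℤ) = (X + 1) * (X^d + X^e - 1) := by
  rintro ⟨a, b, c, d, e, hc, he, hcb, hba, hed, hab, heq⟩
  have h := congrArg (Polynomial.eval (-1 : ℤ)) heq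
  simp [hab, pow_add] at h
  rcases Nat.even_or_odd b with hb | hb <;> rcases Nat.even_or_odd c with hcc | hcc <;>
    simp [hb.neg_one_pow, hcc.neg_one_pow] at h <;> omega
end
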